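/- Suppose additionally that J₁ᵀ = J₁, J₂ᵀ = −J₂, J₃ᵀ = J₃. Suppose some linear map L on matrices indexed by Fin n × Fin n satisfying L(A ⊗ B) = Φ(A) ⊗ Φ(B) for all A, B ∈ Mₙ(ℂ) has the property that for every vector ψ ∈ ℂⁿ ⊗ ℂⁿ ≅ ℂ^{n²} the matrix L(|ψ⟩⟨ψ|) is separable (i.e., Φ is 2-locally entanglement annihilating). Then the matrix Iₙ ⊗ Iₙ + (3/(j(j+1)))·(λ₁²·J₁⊗J₁ − λ₂²·J₂⊗J₂ + λ₃²·J₃⊗J₃) (which is n² times the Choi matrix of Φ∘Φ) is separable. -/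

import Mathlib

open Matrix Kronecker
open scoped ComplexOrder

/-- The spin value `j = (n-1)/2` for an `n`-dimensional system. -/
noncomputable def spinJ (n : ℕ) : ℝ := ((n : ℝ) - 1) / 2

/-- The spin polarization-scaling map
`Φ(X) = (1/n)·tr(X)·Iₙ + (3/(j(j+1)n))·Σᵢ λᵢ·tr(X Jᵢ)·Jᵢ`. -/
noncomputable def Phi (n : ℕ) (J : Fin 3 → Matrix (Fin n) (Fin n) ℂ) (lam : Fin 3 → ℝ)
    (X : Matrix (Fin n) (Fin n) ℂ) : Matrix (Fin n) (Fin n) ℂ :=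
  ((1 / (n : ℝ) : ℝ) : ℂ) • X.trace • (1 : Matrix (Fin n) (Fin n) ℂ) +
    ((3 / (spinJ n * (spinJ n + 1) * n) : ℝ) : ℂ) •
      ∑ i : Fin 3, (lam i : ℂ) • (X * J i).trace • J i

/-- Separability of a matrix on `ℂⁿ ⊗ ℂⁿ`: it is a finite sum of Kronecker products of
positive semidefinite matrices. -/
def MatSeparable (n : ℕ) (R : Matrix (Fin n × Fin n) (Fin n × Fin n) ℂ) : Prop :=
  ∃ (m : ℕ) (A B : Fin m → Matrix (Fin n) (Fin n) ℂ),
    (∀ k, (A k).PosSemidef) ∧ (∀ k, (B k).PosSemidef) ∧ R = ∑ k, A k ⊗ₖ B k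

private lemma outer_diag_eq_sum (n : ℕ) :
    (Matrix.of fun u v : Fin n × Fin n =>
        (if u.1 = u.2 then (1 : ℂ) else 0) * star (if v.1 = v.2 then (1 : ℂ) else 0))
      = ∑ u : Fin n, ∑ v : Fin n,
          Matrix.single u v (1 : ℂ) ⊗ₖ Matrix.single u v (1 : ℂ) := by
  ext ⟨a, c⟩ ⟨b, d⟩
  simp only [Matrix.of_apply, Matrix.sum_apply, Matrix.kroneckerMap_apply]
  simp [Matrix.single, ite_and, mul_ite, ite_mul, Finset.sum_ite_eq,
    Finset.sum_ite_eq', eq_comm]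
  split <;> split <;> simp

private lemma psd_real_smul {n : ℕ} {A : Matrix (Fin n) (Fin n) ℂ} (hA : A.PosSemidef)
    {c : ℝ} (hc : 0 ≤ c) : ((c : ℂ) • A).PosSemidef := by
  exact hA.smul (by exact_mod_cast hc)

private lemma trace_std_mul {n : ℕ} (u v : Fin n) (M : Matrix (Fin n) (Fin n) ℂ) :
    (Matrix.single u v 1 * M).trace = M v u := by
  simp [Matrix.trace, Matrix.diag, Matrix.mul_apply, Matrix.single, ite_and,
    Finset.sum_ite_eq]

private lemma phi_std {n : ℕ} (J : Fin 3 → Matrix (Fin n) (Fin n) ℂ) (lam : Fin 3 → ℝ) (u v : Fin n) :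
    Phi n J lam (Matrix.single u v 1) =
      (if u = v then ((1 / (n : ℝ) : ℝ) : ℂ) else 0) • (1 : Matrix (Fin n) (Fin n) ℂ) +
      ∑ i : Fin 3, (((3 / (spinJ n * (spinJ n + 1) * n) : ℝ) : ℂ) * (lam i : ℂ) * J i v u) • J i := by
  rw [Phi]
  congr 1
  · rcases eq_or_ne u v with h | h
    · subst h
      rw [Matrix.trace_single_eq_same, if_pos rfl, one_smul]
    · rw [Matrix.trace_single_eq_of_ne _ _ _ h, if_neg h, zero_smul, smul_zero]
  · rw [Finset.smul_sum]
    refine Finset.sum_congr rfl fun i _ => ?_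
    rw [trace_std_mul, smul_smul, smul_smul, mul_assoc]

section helpers
variable {n : ℕ}

private lemma sum_sum_smul {α ι : Type*} [Fintype α] [Fintype ι] (e : α → ι → ℂ)
    (M : ι → Matrix (Fin n × Fin n) (Fin n × Fin n) ℂ) :
    ∑ u : α, ∑ k : ι, e u k • M k = ∑ k : ι, (∑ u : α, e u k) • M k := by
  rw [Finset.sum_comm]
  exact Finset.sum_congr rfl fun k _ => Finset.sum_smul.symm

private lemma sum_sum_smul2 {α : Type*} [Fintype α] (e : α → Fin 3 → Fin 3 → ℂ)
    (M : Fin 3 → Fin 3 → Matrix (Fin n × Fin n) (Fin n × Fin n) ℂ) :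
    ∑ u : α, ∑ i : Fin 3, ∑ k : Fin 3, e u i k • M i k
      = ∑ i : Fin 3, ∑ k : Fin 3, (∑ u : α, e u i k) • M i k := by
  rw [Finset.sum_comm]
  refine Finset.sum_congr rfl fun i _ => ?_
  rw [Finset.sum_comm]
  exact Finset.sum_congr rfl fun k _ => Finset.sum_smul.symm

private lemma sum2_smul {α β : Type*} [Fintype α] [Fintype β] (e : α → β → ℂ)
    (M : Matrix (Fin n × Fin n) (Fin n × Fin n) ℂ) :
    ∑ u : α, ∑ v : β, e u v • M = (∑ u : α, ∑ v : β, e u v) • M := by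
  rw [Finset.sum_smul]
  exact Finset.sum_congr rfl fun u _ => Finset.sum_smul.symm

end helpers

private lemma key_sum {n : ℕ} (hn : 2 ≤ n) (J : Fin 3 → Matrix (Fin n) (Fin n) ℂ)
    (htr : ∀ i, (J i).trace = 0)
    (htr2 : ∀ k l, (J k * J l).trace =
      if k = l then ((spinJ n * (spinJ n + 1) * (2 * spinJ n + 1) / 3 : ℝ) : ℂ) else 0)
    (hT1 : (J 0)ᵀ = J 0) (hT2 : (J 1)ᵀ = -(J 1)) (hT3 : (J 2)ᵀ = J 2)
    (lam : Fin 3 → ℝ) :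
    ∑ u : Fin n, ∑ v : Fin n,
        Phi n J lam (Matrix.single u v 1) ⊗ₖ Phi n J lam (Matrix.single u v 1)
      = ((1 / (n : ℝ) : ℝ) : ℂ) •
        ((1 : Matrix (Fin n) (Fin n) ℂ) ⊗ₖ (1 : Matrix (Fin n) (Fin n) ℂ) +
          ((3 / (spinJ n * (spinJ n + 1)) : ℝ) : ℂ) •
            (((lam 0 ^ 2 : ℝ) : ℂ) • (J 0 ⊗ₖ J 0) - ((lam 1 ^ 2 : ℝ) : ℂ) • (J 1 ⊗ₖ J 1) +
              ((lam 2 ^ 2 : ℝ) : ℂ) • (J 2 ⊗ₖ J 2))) := by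
  have hnR : (n : ℝ) ≠ 0 := Nat.cast_ne_zero.mpr (by omega)
  set c1 : ℂ := ((1 / (n : ℝ) : ℝ) : ℂ) with hc1
  set c2 : ℂ := ((3 / (spinJ n * (spinJ n + 1) * n) : ℝ) : ℂ) with hc2
  set t : ℂ := ((spinJ n * (spinJ n + 1) * (2 * spinJ n + 1) / 3 : ℝ) : ℂ) with ht
  set d : ℂ := ((3 / (spinJ n * (spinJ n + 1)) : ℝ) : ℂ) with hd
  set a : Fin n → Fin n → ℂ := fun u v => if u = v then c1 else 0 with ha
  set b : Fin 3 → Fin n → Fin n → ℂ := fun i u v => c2 * (lam i : ℂ) * J i v u with hb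
  set eps : Fin 3 → ℂ := ![1, -1, 1] with heps
  -- entrywise bilinear expansion of the Kronecker square
  have expand : ∀ u v : Fin n,
      Phi n J lam (Matrix.single u v 1) ⊗ₖ Phi n J lam (Matrix.single u v 1)
        = (a u v * a u v) • ((1 : Matrix (Fin n) (Fin n) ℂ) ⊗ₖ 1)
          + (∑ k : Fin 3, (a u v * b k u v) • ((1 : Matrix (Fin n) (Fin n) ℂ) ⊗ₖ J k)
          + (∑ i : Fin 3, (b i u v * a u v) • (J i ⊗ₖ (1 : Matrix (Fin n) (Fin n) ℂ))
          + ∑ i : Fin 3, ∑ k : Fin 3, (b i u v * b k u v) • (J i ⊗ₖ J k))) := by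
    intro u v
    rw [phi_std]
    ext ⟨x, y⟩ ⟨z, w⟩
    simp only [Matrix.kroneckerMap_apply, Matrix.add_apply, Matrix.smul_apply,
      Matrix.sum_apply, smul_eq_mul, ha, hb, Fin.sum_univ_three]
    ring
  -- scalar sums
  have hs1 : ∑ u : Fin n, ∑ v : Fin n, a u v * a u v = (n : ℂ) * (c1 * c1) := by
    simp [ha, ite_mul, mul_ite, Finset.sum_ite_eq, Finset.card_univ, mul_comm]
  have htrsum : ∀ k, ∑ u : Fin n, J k u u = 0 := by
    intro k
    simpa [Matrix.trace, Matrix.diag] using htr k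
  have hs2 : ∀ k, ∑ u : Fin n, ∑ v : Fin n, a u v * b k u v = 0 := by
    intro k
    have h1 : ∀ u, ∑ v : Fin n, a u v * b k u v = c1 * c2 * (lam k : ℂ) * J k u u := by
      intro u
      rw [Finset.sum_eq_single u]
      · simp [ha, hb]; ring
      · intro v _ hvu
        simp [ha, hb, Ne.symm hvu]
      · simp
    rw [Finset.sum_congr rfl fun u _ => h1 u, ← Finset.mul_sum, htrsum, mul_zero]
  have hs3 : ∀ i, ∑ u : Fin n, ∑ v : Fin n, b i u v * a u v = 0 := by
    intro i
    have h1 : ∀ u, ∑ v : Fin n, b i u v * a u v = c1 * c2 * (lam i : ℂ) * J i u u := by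
      intro u
      rw [Finset.sum_eq_single u]
      · simp [ha, hb]; ring
      · intro v _ hvu
        simp [ha, hb, Ne.symm hvu]
      · simp
    rw [Finset.sum_congr rfl fun u _ => h1 u, ← Finset.mul_sum, htrsum, mul_zero]
  have hJT : ∀ i k : Fin 3, (J k * (J i)ᵀ).trace = if i = k then eps i * t else 0 := by
    intro i k
    match i with
    | 0 =>
      rw [hT1, Matrix.trace_mul_comm, htr2 0 k]
      simp [heps]
    | 1 =>
      rw [hT2, Matrix.mul_neg, Matrix.trace_neg, Matrix.trace_mul_comm, htr2 1 k]
      split <;> simp [heps]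
    | 2 =>
      rw [hT3, Matrix.trace_mul_comm, htr2 2 k]
      simp [heps]
  have hs4 : ∀ i k : Fin 3, ∑ u : Fin n, ∑ v : Fin n, b i u v * b k u v
      = (c2 * (lam i : ℂ)) * (c2 * (lam k : ℂ)) * (J k * (J i)ᵀ).trace := by
    intro i k
    have htr' : (J k * (J i)ᵀ).trace = ∑ u : Fin n, ∑ v : Fin n, J k v u * J i v u := by
      rw [Finset.sum_comm]
      simp [Matrix.trace, Matrix.diag, Matrix.mul_apply, Matrix.transpose_apply]
    rw [htr', Finset.mul_sum]
    refine Finset.sum_congr rfl fun u _ => ?_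
    rw [Finset.mul_sum]
    refine Finset.sum_congr rfl fun v _ => ?_
    simp only [hb]
    ring
  -- assemble
  calc
    ∑ u : Fin n, ∑ v : Fin n,
        Phi n J lam (Matrix.single u v 1) ⊗ₖ Phi n J lam (Matrix.single u v 1)
      = ∑ u : Fin n, ∑ v : Fin n,
          ((a u v * a u v) • ((1 : Matrix (Fin n) (Fin n) ℂ) ⊗ₖ 1)
          + (∑ k : Fin 3, (a u v * b k u v) • ((1 : Matrix (Fin n) (Fin n) ℂ) ⊗ₖ J k)
          + (∑ i : Fin 3, (b i u v * a u v) • (J i ⊗ₖ (1 : Matrix (Fin n) (Fin n) ℂ))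
          + ∑ i : Fin 3, ∑ k : Fin 3, (b i u v * b k u v) • (J i ⊗ₖ J k)))) :=
        Finset.sum_congr rfl fun u _ => Finset.sum_congr rfl fun v _ => expand u v
    _ = (∑ u : Fin n, ∑ v : Fin n, (a u v * a u v)) • ((1 : Matrix (Fin n) (Fin n) ℂ) ⊗ₖ 1)
          + (∑ k : Fin 3, (∑ u : Fin n, ∑ v : Fin n, a u v * b k u v) • ((1 : Matrix (Fin n) (Fin n) ℂ) ⊗ₖ J k)
          + (∑ i : Fin 3, (∑ u : Fin n, ∑ v : Fin n, b i u v * a u v) • (J i ⊗ₖ (1 : Matrix (Fin n) (Fin n) ℂ))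
          + ∑ i : Fin 3, ∑ k : Fin 3, (∑ u : Fin n, ∑ v : Fin n, b i u v * b k u v) • (J i ⊗ₖ J k))) := by
        simp only [Finset.sum_add_distrib]
        congr 1
        · exact sum2_smul _ _
        congr 1
        · rw [Finset.sum_congr rfl fun u (_ : u ∈ Finset.univ) =>
            sum_sum_smul (fun v k => a u v * b k u v) (fun k => (1 : Matrix (Fin n) (Fin n) ℂ) ⊗ₖ J k)]
          exact sum_sum_smul _ _
        congr 1
        · rw [Finset.sum_congr rfl fun u (_ : u ∈ Finset.univ) =>
            sum_sum_smul (fun v i => b i u v * a u v) (fun i => J i ⊗ₖ (1 : Matrix (Fin n) (Fin n) ℂ))]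
          exact sum_sum_smul _ _
        · rw [Finset.sum_congr rfl fun u (_ : u ∈ Finset.univ) =>
            sum_sum_smul2 (fun v i k => b i u v * b k u v) (fun i k => J i ⊗ₖ J k)]
          exact sum_sum_smul2 _ _
    _ = ((n : ℂ) * (c1 * c1)) • ((1 : Matrix (Fin n) (Fin n) ℂ) ⊗ₖ 1)
          + ∑ i : Fin 3, ((c2 * (lam i : ℂ)) * (c2 * (lam i : ℂ)) * (eps i * t)) • (J i ⊗ₖ J i) := by
        rw [hs1]
        simp only [hs2, hs3, zero_smul, Finset.sum_const_zero, zero_add, add_zero]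
        congr 1
        refine Finset.sum_congr rfl fun i _ => ?_
        rw [Finset.sum_congr rfl fun k (_ : k ∈ Finset.univ) => by rw [hs4 i k, hJT i k]]
        simp only [mul_ite, mul_zero, ite_smul, zero_smul]
        rw [Finset.sum_ite_eq]
        simp
    _ = _ := by
        -- scalar identities
        have h2j : 2 * spinJ n + 1 = (n : ℝ) := by
          rw [spinJ]; ring
        have hj0 : spinJ n ≠ 0 := by
          rw [spinJ]
          have : (2 : ℝ) ≤ (n : ℝ) := by exact_mod_cast hn
          nlinarith
        have hj1 : spinJ n + 1 ≠ 0 := by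
          rw [spinJ]
          have : (2 : ℝ) ≤ (n : ℝ) := by exact_mod_cast hn
          nlinarith
        have e1 : (n : ℂ) * (c1 * c1) = c1 := by
          rw [hc1, ← Complex.ofReal_natCast, ← Complex.ofReal_mul, ← Complex.ofReal_mul]
          congr 1
          field_simp
        have elam : ∀ l : ℝ,
            (3 / (spinJ n * (spinJ n + 1) * n) * l) * (3 / (spinJ n * (spinJ n + 1) * n) * l)
              * (spinJ n * (spinJ n + 1) * (2 * spinJ n + 1) / 3)
            = 1 / n * (3 / (spinJ n * (spinJ n + 1)) * l ^ 2) := by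
          intro l
          rw [h2j]
          field_simp
        have E : ∀ l : ℝ, (c2 * (l : ℂ)) * (c2 * (l : ℂ)) * t = c1 * (d * ((l ^ 2 : ℝ) : ℂ)) := by
          intro l
          rw [hc2, ht, hc1, hd]
          exact_mod_cast congrArg Complex.ofReal (elam l)
        rw [e1, Fin.sum_univ_three]
        have heps0 : eps 0 = 1 := rfl
        have heps1 : eps 1 = -1 := rfl
        have heps2 : eps 2 = 1 := rfl
        rw [heps0, heps1, heps2]
        rw [show (c2 * (lam 0 : ℂ)) * (c2 * (lam 0 : ℂ)) * (1 * t)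
            = c1 * (d * ((lam 0 ^ 2 : ℝ) : ℂ)) by rw [one_mul]; exact E (lam 0)]
        rw [show (c2 * (lam 1 : ℂ)) * (c2 * (lam 1 : ℂ)) * (-1 * t)
            = -(c1 * (d * ((lam 1 ^ 2 : ℝ) : ℂ))) by rw [← E (lam 1)]; ring]
        rw [show (c2 * (lam 2 : ℂ)) * (c2 * (lam 2 : ℂ)) * (1 * t)
            = c1 * (d * ((lam 2 ^ 2 : ℝ) : ℂ)) by rw [one_mul]; exact E (lam 2)]
        module

theorem two_locally_entanglement_annihilating_implies_square_eb
    (n : ℕ) (hn : 2 ≤ n) (J : Fin 3 → Matrix (Fin n) (Fin n) ℂ)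
    (hherm : ∀ i, (J i).IsHermitian)
    (htr : ∀ i, (J i).trace = 0)
    (htr2 : ∀ k l, (J k * J l).trace =
      if k = l then ((spinJ n * (spinJ n + 1) * (2 * spinJ n + 1) / 3 : ℝ) : ℂ) else 0)
    (hT1 : (J 0)ᵀ = J 0) (hT2 : (J 1)ᵀ = -(J 1)) (hT3 : (J 2)ᵀ = J 2)
    (lam : Fin 3 → ℝ)
    (hlea : ∃ L : Matrix (Fin n × Fin n) (Fin n × Fin n) ℂ →ₗ[ℂ]
          Matrix (Fin n × Fin n) (Fin n × Fin n) ℂ,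
      (∀ A B : Matrix (Fin n) (Fin n) ℂ, L (A ⊗ₖ B) = Phi n J lam A ⊗ₖ Phi n J lam B) ∧
      (∀ ψ : Fin n × Fin n → ℂ,
        MatSeparable n (L (Matrix.of fun u v : Fin n × Fin n => ψ u * star (ψ v))))) :
    MatSeparable n
      ((1 : Matrix (Fin n) (Fin n) ℂ) ⊗ₖ (1 : Matrix (Fin n) (Fin n) ℂ) +
        ((3 / (spinJ n * (spinJ n + 1)) : ℝ) : ℂ) •
          (((lam 0 ^ 2 : ℝ) : ℂ) • (J 0 ⊗ₖ J 0) - ((lam 1 ^ 2 : ℝ) : ℂ) • (J 1 ⊗ₖ J 1) +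
            ((lam 2 ^ 2 : ℝ) : ℂ) • (J 2 ⊗ₖ J 2))) := by
  obtain ⟨L, hL, hsep⟩ := hlea
  have hnR : (n : ℝ) ≠ 0 := Nat.cast_ne_zero.mpr (by omega)
  set ψ : Fin n × Fin n → ℂ := fun u => if u.1 = u.2 then 1 else 0 with hψ
  obtain ⟨m, A, B, hA, hB, hsum⟩ := hsep ψ
  have hLR : L (Matrix.of fun u v : Fin n × Fin n => ψ u * star (ψ v))
      = ∑ u : Fin n, ∑ v : Fin n,
          Phi n J lam (Matrix.single u v 1) ⊗ₖ Phi n J lam (Matrix.single u v 1) := by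
    rw [hψ]
    rw [outer_diag_eq_sum n, map_sum]
    refine Finset.sum_congr rfl fun u _ => ?_
    rw [map_sum]
    exact Finset.sum_congr rfl fun v _ => hL _ _
  have hmain :
      ((1 : Matrix (Fin n) (Fin n) ℂ) ⊗ₖ (1 : Matrix (Fin n) (Fin n) ℂ) +
        ((3 / (spinJ n * (spinJ n + 1)) : ℝ) : ℂ) •
          (((lam 0 ^ 2 : ℝ) : ℂ) • (J 0 ⊗ₖ J 0) - ((lam 1 ^ 2 : ℝ) : ℂ) • (J 1 ⊗ₖ J 1) +
            ((lam 2 ^ 2 : ℝ) : ℂ) • (J 2 ⊗ₖ J 2)))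
        = (((n : ℝ) : ℂ)) • L (Matrix.of fun u v : Fin n × Fin n => ψ u * star (ψ v)) := by
    rw [hLR, key_sum hn J htr htr2 hT1 hT2 hT3 lam, smul_smul]
    rw [show ((n : ℝ) : ℂ) * ((1 / (n : ℝ) : ℝ) : ℂ) = 1 by
      rw [← Complex.ofReal_mul, mul_one_div_cancel hnR, Complex.ofReal_one]]
    rw [one_smul]
  rw [hmain, hsum, Finset.smul_sum]
  refine ⟨m, fun k => ((n : ℝ) : ℂ) • A k, B,
    fun k => psd_real_smul (hA k) (by positivity), hB, ?_⟩
  exact Finset.sum_congr rfl fun k _ => (Matrix.smul_kronecker _ _ _).symm
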